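/- Av(312)𝒜 = Av(3142, 4132). -/

import Mathlib

/-- A permutation of length `n` (a bijection of `{0, …, n-1}`, identified with the
sequence of its values), packaged with its length. -/
abbrev PermSig : Type := Σ n : ℕ, Equiv.Perm (Fin n)

/-- Pattern containment: the permutation `α` of length `k` is contained in the
permutation `τ` of length `n` if there is an increasing choice of positions on which
`τ` is order-isomorphic to `α`. -/
def Contains {k n : ℕ} (α : Equiv.Perm (Fin k)) (τ : Equiv.Perm (Fin n)) : Prop :=
  ∃ f : Fin k ↪o Fin n, ∀ i j : Fin k, α i < α j ↔ τ (f i) < τ (f j)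

/-- The avoidance class `Av B`: all permutations containing no member of `B`. -/
def Av (B : Set PermSig) : Set PermSig :=
  {τ : PermSig | ∀ β ∈ B, ¬ Contains β.2 τ.2}

/-- A pattern class: a set of permutations downward closed under pattern containment. -/
def IsPatternClass (C : Set PermSig) : Prop :=
  ∀ (k n : ℕ) (α : Equiv.Perm (Fin k)) (τ : Equiv.Perm (Fin n)),
    Contains α τ → (⟨n, τ⟩ : PermSig) ∈ C → (⟨k, α⟩ : PermSig) ∈ C

/-- The base relation of the poset `P(τ)` on values: `x ≺ y` whenever `x` appears
before `y` in `τ` and either `x > y`, or some value `z` appears between `x` and `y`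
in `τ` with `x < y < z`. -/
def PQBase {n : ℕ} (τ : Equiv.Perm (Fin n)) (x y : Fin n) : Prop :=
  τ.symm x < τ.symm y ∧
    (y < x ∨ ∃ z : Fin n, τ.symm x < τ.symm z ∧ τ.symm z < τ.symm y ∧ x < y ∧ y < z)

/-- The poset `P(τ)`: the transitive closure of the base relation. -/
def PQ {n : ℕ} (τ : Equiv.Perm (Fin n)) : Fin n → Fin n → Prop :=
  Relation.TransGen (PQBase τ)

/-- `σ` is a linear extension of `P(τ)`; equivalently, `(σ, τ)` is an allowable pair,
i.e. a priority queue can produce output `τ` from input `σ`. -/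
def Allowable {n : ℕ} (σ τ : Equiv.Perm (Fin n)) : Prop :=
  ∀ x y : Fin n, PQ τ x y → σ.symm x < σ.symm y

/-- `C𝒜`: the set of permutations obtainable by a priority queue from an input in `C`. -/
def ImageA (C : Set PermSig) : Set PermSig :=
  {τ : PermSig | ∃ σ : Equiv.Perm (Fin τ.1), (⟨τ.1, σ⟩ : PermSig) ∈ C ∧ Allowable σ τ.2}

/-- The pattern `312` (written 0-indexed). -/
noncomputable def p312 : Equiv.Perm (Fin 3) :=
  Equiv.ofBijective (![2, 0, 1] : Fin 3 → Fin 3) (by decide)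

/-- The pattern `3142` (written 0-indexed). -/
noncomputable def p3142 : Equiv.Perm (Fin 4) :=
  Equiv.ofBijective (![2, 0, 3, 1] : Fin 4 → Fin 4) (by decide)

/-- The pattern `4132` (written 0-indexed). -/
noncomputable def p4132 : Equiv.Perm (Fin 4) :=
  Equiv.ofBijective (![3, 0, 2, 1] : Fin 4 → Fin 4) (by decide)

/-! ### Auxiliary material for the proof -/

section Aux

variable {n : ℕ}

/-- Order embedding of `Fin 3` through three given increasing points. -/
def finEmb3 (a b c : Fin n) (h1 : a < b) (h2 : b < c) : Fin 3 ↪o Fin n :=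
  OrderEmbedding.ofStrictMono ![a, b, c] (show StrictMono ![a, b, c] by
    intro i j hij
    fin_cases i <;> fin_cases j <;> simp_all <;> omega)

/-- Order embedding of `Fin 4` through four given increasing points. -/
def finEmb4 (a b c d : Fin n) (h1 : a < b) (h2 : b < c) (h3 : c < d) : Fin 4 ↪o Fin n :=
  OrderEmbedding.ofStrictMono ![a, b, c, d] (show StrictMono ![a, b, c, d] by
    intro i j hij
    fin_cases i <;> fin_cases j <;> simp_all <;> omega)

/-- Running maximum of `t` up to the position of `x` (inclusive). -/
noncomputable def rmax (t : Equiv.Perm (Fin n)) (x : Fin n) : Fin n :=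
  Finset.max' (Finset.univ.filter fun y => t.symm y ≤ t.symm x) ⟨x, by simp⟩

lemma le_rmax (t : Equiv.Perm (Fin n)) (x : Fin n) : x ≤ rmax t x :=
  Finset.le_max' _ _ (by simp)

lemma le_rmax_of (t : Equiv.Perm (Fin n)) {x y : Fin n} (h : t.symm y ≤ t.symm x) :
    y ≤ rmax t x := Finset.le_max' _ _ (by simp [h])

lemma rmax_pos_le (t : Equiv.Perm (Fin n)) (x : Fin n) : t.symm (rmax t x) ≤ t.symm x := by
  have := Finset.max'_mem (Finset.univ.filter fun y => t.symm y ≤ t.symm x) ⟨x, by simp⟩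
  simpa [rmax] using this

lemma rmax_pos_lt (t : Equiv.Perm (Fin n)) {x : Fin n} (h : x < rmax t x) :
    t.symm (rmax t x) < t.symm x :=
  lt_of_le_of_ne (rmax_pos_le t x) (fun he => absurd (t.symm.injective he) (by omega))

lemma rmax_mono (t : Equiv.Perm (Fin n)) {x y : Fin n} (h : t.symm x ≤ t.symm y) :
    rmax t x ≤ rmax t y := le_rmax_of t ((rmax_pos_le t x).trans h)

/-- The no-forbidden-configuration property of `t`: there are no four values
`v1, v2, v3, v4` in this positional order with `v2 < v4 < v1` and `v4 < v3`.
This is exactly the conjunction of avoiding `3142` and `4132`. -/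
def NoF (t : Equiv.Perm (Fin n)) : Prop :=
  ∀ v1 v2 v3 v4 : Fin n, t.symm v1 < t.symm v2 → t.symm v2 < t.symm v3 →
    t.symm v3 < t.symm v4 → v2 < v4 → v4 < v1 → v4 < v3 → False

lemma noForb {t : Equiv.Perm (Fin n)}
    (hτ : (⟨n, t⟩ : PermSig) ∈ Av {(⟨4, p3142⟩ : PermSig), (⟨4, p4132⟩ : PermSig)}) :
    NoF t := by
  intro v1 v2 v3 v4 h12 h23 h34 hA hB hC
  rcases lt_trichotomy v1 v3 with h | h | h
  · exact hτ ⟨4, p3142⟩ (Set.mem_insert _ _) ⟨finEmb4 _ _ _ _ h12 h23 h34, by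
      intro i j
      fin_cases i <;> fin_cases j <;>
        simp [p3142, finEmb4, Equiv.ofBijective, Equiv.apply_symm_apply] <;> omega⟩
  · subst h; omega
  · exact hτ ⟨4, p4132⟩ (Set.mem_insert_iff.2 (Or.inr rfl))
      ⟨finEmb4 _ _ _ _ h12 h23 h34, by
      intro i j
      fin_cases i <;> fin_cases j <;>
        simp [p4132, finEmb4, Equiv.ofBijective, Equiv.apply_symm_apply] <;> omega⟩

/-- The strict order in which the constructed input permutation lists the values. -/
def slt (t : Equiv.Perm (Fin n)) (x y : Fin n) : Prop :=
  (x < y ∧ rmax t x < y) ∨ (y < x ∧ x ≤ rmax t y)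

lemma slt_irrefl (t : Equiv.Perm (Fin n)) (x : Fin n) : ¬ slt t x x := by
  rintro (⟨h, -⟩ | ⟨h, -⟩) <;> exact lt_irrefl _ h

lemma slt_total (t : Equiv.Perm (Fin n)) {x y : Fin n} (h : x ≠ y) :
    slt t x y ∨ slt t y x := by
  rcases lt_trichotomy x y with h' | h' | h'
  · rcases lt_or_ge (rmax t x) y with h'' | h''
    · exact Or.inl (Or.inl ⟨h', h''⟩)
    · exact Or.inr (Or.inr ⟨h', h''⟩)
  · exact absurd h' h
  · rcases lt_or_ge (rmax t y) x with h'' | h''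
    · exact Or.inr (Or.inl ⟨h', h''⟩)
    · exact Or.inl (Or.inr ⟨h', h''⟩)

lemma slt_trans (t : Equiv.Perm (Fin n)) (hF : NoF t) {x y z : Fin n}
    (h1 : slt t x y) (h2 : slt t y z) : slt t x z := by
  rcases h1 with ⟨hxy, hMx⟩ | ⟨hyx, hxMy⟩
  · rcases h2 with ⟨hyz, hMy⟩ | ⟨hzy, hyMz⟩
    · exact Or.inl ⟨hxy.trans hyz, hMx.trans hyz⟩
    · rcases lt_trichotomy x z with hxz | rfl | hzx
      · left; refine ⟨hxz, ?_⟩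
        by_contra hc
        push_neg at hc
        set v := rmax t x with hv
        set v' := rmax t z with hv'
        have hxv : x < v := lt_of_lt_of_le hxz hc
        have hpv : t.symm v < t.symm x := rmax_pos_lt t hxv
        have hzv' : z < v' := lt_of_lt_of_le hzy hyMz
        have hpv' : t.symm v' < t.symm z := rmax_pos_lt t hzv'
        have hxv' : t.symm x < t.symm v' := by
          by_contra hcc
          push_neg at hcc
          have : v' ≤ v := le_rmax_of t hcc
          omega
        rcases eq_or_lt_of_le hc with he | hlt
        · have : rmax t z ≤ rmax t x := rmax_mono t (by rw [he]; exact le_of_lt hpv)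
          omega
        · exact hF v x v' z hpv hxv' hpv' hxz hlt (lt_of_lt_of_le hzy hyMz)
      · omega
      · exact Or.inr ⟨hzx, le_of_lt (lt_of_lt_of_le hxy hyMz)⟩
  · rcases h2 with ⟨hyz, hMyz⟩ | ⟨hzy, hyMz⟩
    · have hxz : x < z := lt_of_le_of_lt hxMy hMyz
      left; refine ⟨hxz, ?_⟩
      by_contra hc
      push_neg at hc
      set v := rmax t x with hv
      set u := rmax t y with hu
      have hxv : x < v := lt_of_lt_of_le hxz hc
      have hpv : t.symm v < t.symm x := rmax_pos_lt t hxv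
      have hpyx : t.symm y < t.symm x := by
        by_contra hcc
        push_neg at hcc
        have : rmax t x ≤ rmax t y := rmax_mono t hcc
        omega
      have hpyv : t.symm y < t.symm v := by
        by_contra hcc
        push_neg at hcc
        have : v ≤ rmax t y := le_rmax_of t hcc
        omega
      have hxu : x < u := by
        rcases eq_or_lt_of_le hxMy with he | hlt
        · exfalso
          have : t.symm u ≤ t.symm y := rmax_pos_le t y
          rw [← he] at this; omega
        · exact hlt
      have hpuy : t.symm u < t.symm y := rmax_pos_lt t (lt_trans hyx hxu)
      exact hF u y v x hpuy hpyv hpv hyx hxu (lt_of_lt_of_le hxz hc)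
    · refine Or.inr ⟨hzy.trans hyx, ?_⟩
      by_contra hc
      push_neg at hc
      set u := rmax t z with hu
      set v := rmax t y with hv
      have hyu : y ≤ u := hyMz
      have hpzy : t.symm z < t.symm y := by
        by_contra hcc
        push_neg at hcc
        have : rmax t y ≤ rmax t z := rmax_mono t hcc
        omega
      have hpzv : t.symm z < t.symm v := by
        by_contra hcc
        push_neg at hcc
        have : v ≤ rmax t z := le_rmax_of t hcc
        omega
      have hyv : y < v := lt_of_lt_of_le hyx hxMy
      have hpvy : t.symm v < t.symm y := rmax_pos_lt t hyv
      have hyu' : y < u := by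
        rcases eq_or_lt_of_le hyu with he | hlt
        · exfalso
          have : t.symm u ≤ t.symm z := rmax_pos_le t z
          rw [← he] at this; omega
        · exact hlt
      have hpuz : t.symm u < t.symm z := rmax_pos_lt t (lt_trans hzy hyu')
      exact hF u z v y hpuz hpzv hpvy hzy hyu' hyv

noncomputable local instance (t : Equiv.Perm (Fin n)) (x y : Fin n) : Decidable (slt t x y) :=
  Classical.dec _

/-- The position that `x` receives in the constructed input permutation:
the number of values preceding it in the order `slt`. -/
noncomputable def sidx (t : Equiv.Perm (Fin n)) (x : Fin n) : Fin n :=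
  ⟨(Finset.univ.filter fun y => slt t y x).card, by
    have h : (Finset.univ.filter fun y => slt t y x) ⊆ Finset.univ.erase x := by
      intro y hy
      simp only [Finset.mem_filter] at hy
      exact Finset.mem_erase.2 ⟨fun he => slt_irrefl t x (he ▸ hy.2), Finset.mem_univ y⟩
    have h2 := Finset.card_le_card h
    have h3 : (Finset.univ.erase x).card = n - 1 := by
      simp [Finset.card_erase_of_mem]
    have : 0 < n := x.pos
    omega⟩

lemma sidx_lt (t : Equiv.Perm (Fin n)) (hF : NoF t) {x y : Fin n} (h : slt t x y) :
    sidx t x < sidx t y := by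
  have hsub : insert x (Finset.univ.filter fun z => slt t z x) ⊆
      (Finset.univ.filter fun z => slt t z y) := by
    intro z hz
    rcases Finset.mem_insert.1 hz with rfl | hz
    · simp [h]
    · simp only [Finset.mem_filter] at hz ⊢
      exact ⟨Finset.mem_univ z, slt_trans t hF hz.2 h⟩
  have hx : x ∉ (Finset.univ.filter fun z => slt t z x) := by
    simp [slt_irrefl t x]
  have := Finset.card_le_card hsub
  rw [Finset.card_insert_of_notMem hx] at this
  exact Fin.mk_lt_mk.2 (by omega)

lemma slt_iff_sidx (t : Equiv.Perm (Fin n)) (hF : NoF t) {x y : Fin n} :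
    slt t x y ↔ sidx t x < sidx t y := by
  constructor
  · exact sidx_lt t hF
  · intro h
    rcases eq_or_ne x y with rfl | hne
    · exact absurd h (lt_irrefl _)
    · rcases slt_total t hne with h' | h'
      · exact h'
      · exact absurd (sidx_lt t hF h') (by omega)

lemma sidx_bij (t : Equiv.Perm (Fin n)) (hF : NoF t) : Function.Bijective (sidx t) := by
  rw [← Finite.injective_iff_bijective]
  intro x y he
  rcases eq_or_ne x y with rfl | hne
  · rfl
  · rcases slt_total t hne with h' | h' <;>
      · have := sidx_lt t hF h'; rw [he] at this; omega

/-- The constructed input permutation. -/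
noncomputable def sigmaOf (t : Equiv.Perm (Fin n)) (hF : NoF t) : Equiv.Perm (Fin n) :=
  (Equiv.ofBijective (sidx t) (sidx_bij t hF)).symm

lemma sigmaOf_symm (t : Equiv.Perm (Fin n)) (hF : NoF t) (x : Fin n) :
    (sigmaOf t hF).symm x = sidx t x := rfl

lemma base_slt (t : Equiv.Perm (Fin n)) (hF : NoF t) {x y : Fin n}
    (hb : PQBase t x y) : slt t x y := by
  obtain ⟨hpos, hcase⟩ := hb
  rcases hcase with hyx | ⟨z, h1, h2, hxy, hyz⟩
  · exact Or.inr ⟨hyx, le_rmax_of t (le_of_lt hpos)⟩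
  · left; refine ⟨hxy, ?_⟩
    by_contra hc
    push_neg at hc
    have hxv : x < rmax t x := lt_of_lt_of_le hxy hc
    have hp : t.symm (rmax t x) < t.symm x := rmax_pos_lt t hxv
    have hyv : y < rmax t x := by
      rcases eq_or_lt_of_le hc with he | hlt
      · exfalso
        have := rmax_pos_le t x
        rw [← he] at this; omega
      · exact hlt
    exact hF (rmax t x) x z y hp h1 h2 hxy hyv hyz

lemma allowable_sigmaOf (t : Equiv.Perm (Fin n)) (hF : NoF t) :
    Allowable (sigmaOf t hF) t := by
  intro x y h
  induction h with
  | single hb => exact (slt_iff_sidx t hF).1 (base_slt t hF hb)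
  | tail _ hb ih => exact lt_trans ih ((slt_iff_sidx t hF).1 (base_slt t hF hb))

lemma sigmaOf_av (t : Equiv.Perm (Fin n)) (hF : NoF t) :
    (⟨n, sigmaOf t hF⟩ : PermSig) ∈ Av {(⟨3, p312⟩ : PermSig)} := by
  intro β hβ
  rcases hβ with rfl
  change ¬ Contains p312 (sigmaOf t hF)
  rintro ⟨f, hf⟩
  set σ := sigmaOf t hF with hσ
  have e : ∀ z, sidx t (σ z) = z := fun z => σ.symm_apply_apply z
  have h01 : f 0 < f 1 := f.lt_iff_lt.2 (by decide)
  have h12 : f 1 < f 2 := f.lt_iff_lt.2 (by decide)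
  have huw : σ (f 1) < σ (f 2) := (hf 1 2).1 (by decide)
  have hwv : σ (f 2) < σ (f 0) := (hf 2 0).1 (by decide)
  have s1 : slt t (σ (f 0)) (σ (f 1)) := (slt_iff_sidx t hF).2 (by rw [e, e]; exact h01)
  have s2 : slt t (σ (f 1)) (σ (f 2)) := (slt_iff_sidx t hF).2 (by rw [e, e]; exact h12)
  rcases s1 with ⟨h, -⟩ | ⟨-, hvMu⟩
  · omega
  · rcases s2 with ⟨-, hMuw⟩ | ⟨h, -⟩
    · omega
    · omega

lemma key1 {σ t : Equiv.Perm (Fin n)}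
    (hAv : (⟨n, σ⟩ : PermSig) ∈ Av {(⟨3, p312⟩ : PermSig)})
    (hall : Allowable σ t) {q1 q2 q3 q4 : Fin n}
    (h12 : q1 < q2) (h23 : q2 < q3) (h34 : q3 < q4)
    (hbd : t q2 < t q4) (hda : t q4 < t q1) (hdc : t q4 < t q3) : False := by
  have hab : PQ t (t q1) (t q2) := Relation.TransGen.single
    ⟨by simpa using h12, Or.inl (by omega)⟩
  have hbd' : PQ t (t q2) (t q4) := Relation.TransGen.single
    ⟨by simpa using h23.trans h34,
      Or.inr ⟨t q3, by simpa using h23, by simpa using h34, by omega, hdc⟩⟩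
  have s1 := hall _ _ hab
  have s2 := hall _ _ hbd'
  refine hAv ⟨3, p312⟩ rfl ⟨finEmb3 _ _ _ s1 s2, ?_⟩
  intro i j
  have e : ∀ z, σ (σ.symm z) = z := σ.apply_symm_apply
  fin_cases i <;> fin_cases j <;>
    simp [p312, finEmb3, Equiv.ofBijective, e] <;> omega

end Aux

/-- `Av(312)𝒜 = Av(3142, 4132)`. -/
theorem imageA_av312 :
    ImageA (Av {(⟨3, p312⟩ : PermSig)}) = Av {(⟨4, p3142⟩ : PermSig), (⟨4, p4132⟩ : PermSig)} := by
  ext T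
  obtain ⟨n, t⟩ := T
  constructor
  · rintro ⟨σ, hσ, hall⟩ β hβ
    simp only [Set.mem_insert_iff, Set.mem_singleton_iff] at hβ
    rcases hβ with rfl | rfl
    · rintro ⟨f, hf⟩
      exact key1 hσ hall (f.lt_iff_lt.2 (by decide)) (f.lt_iff_lt.2 (by decide))
        (f.lt_iff_lt.2 (by decide))
        ((hf 1 3).1 (by decide)) ((hf 3 0).1 (by decide)) ((hf 3 2).1 (by decide))
    · rintro ⟨f, hf⟩
      exact key1 hσ hall (f.lt_iff_lt.2 (by decide)) (f.lt_iff_lt.2 (by decide))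
        (f.lt_iff_lt.2 (by decide))
        ((hf 1 3).1 (by decide)) ((hf 3 0).1 (by decide)) ((hf 3 2).1 (by decide))
  · intro hτ
    have hF : NoF t := noForb hτ
    exact ⟨sigmaOf t hF, sigmaOf_av t hF, allowable_sigmaOf t hF⟩
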